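/- Let A, B be m×m complex matrices, let X be an m×n complex matrix and Y an m×p complex matrix satisfying A·X = X, B·Y = Y, range(A·Y) ⊆ range(X), and range(B·X) ⊆ range(Y). Then rank(rowBlock(A·Y, B·X)) = rank(rowBlock(X, Y)) + rank(A·Y) + rank(B·X) − rank(X) − rank(Y). -/

import Mathlib

open Matrix

lemma range_fromColumns_aux {m n p : ℕ} (X : Matrix (Fin m) (Fin n) ℂ)
    (Y : Matrix (Fin m) (Fin p) ℂ) :
    LinearMap.range (Matrix.fromCols X Y).mulVecLin =
      LinearMap.range X.mulVecLin ⊔ LinearMap.range Y.mulVecLin := by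
  apply le_antisymm
  · rintro _ ⟨v, rfl⟩
    rw [mulVecLin_apply]
    have hv : v = Sum.elim (v ∘ Sum.inl) (v ∘ Sum.inr) := by
      funext i; cases i <;> rfl
    rw [hv, fromCols_mulVec_sumElim]
    exact Submodule.add_mem_sup ⟨_, rfl⟩ ⟨_, rfl⟩
  · rw [sup_le_iff]
    constructor <;> rintro _ ⟨v, rfl⟩
    · exact ⟨Sum.elim v 0, by simp [fromCols_mulVec_sumElim]⟩
    · exact ⟨Sum.elim 0 v, by simp [fromCols_mulVec_sumElim]⟩

lemma rank_fromColumns_aux {m n p : ℕ} (X : Matrix (Fin m) (Fin n) ℂ)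
    (Y : Matrix (Fin m) (Fin p) ℂ) :
    (Matrix.fromCols X Y).rank =
      Module.finrank ℂ ↥(LinearMap.range X.mulVecLin ⊔ LinearMap.range Y.mulVecLin) := by
  rw [Matrix.rank, range_fromColumns_aux]

/-- If `A * X = X`, `B * Y = Y`, `range (A*Y) ⊆ range X` and
`range (B*X) ⊆ range Y`, then
`rank [A*Y, B*X] = rank [X, Y] + rank (A*Y) + rank (B*X) - rank X - rank Y`. -/
theorem stmt_2 (m n p : ℕ) (A B : Matrix (Fin m) (Fin m) ℂ)
    (X : Matrix (Fin m) (Fin n) ℂ) (Y : Matrix (Fin m) (Fin p) ℂ)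
    (h1 : A * X = X) (h2 : B * Y = Y)
    (h3 : LinearMap.range (A * Y).mulVecLin ≤ LinearMap.range X.mulVecLin)
    (h4 : LinearMap.range (B * X).mulVecLin ≤ LinearMap.range Y.mulVecLin) :
    ((Matrix.fromCols (A * Y) (B * X)).rank : ℤ) =
      ((Matrix.fromCols X Y).rank : ℤ) + ((A * Y).rank : ℤ) + ((B * X).rank : ℤ)
        - (X.rank : ℤ) - (Y.rank : ℤ) := by
  have hinf : LinearMap.range (A * Y).mulVecLin ⊓ LinearMap.range (B * X).mulVecLin =
      LinearMap.range X.mulVecLin ⊓ LinearMap.range Y.mulVecLin := by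
    apply le_antisymm
    · exact inf_le_inf h3 h4
    · rintro v ⟨⟨u, hu⟩, ⟨w, hw⟩⟩
      constructor
      · refine ⟨w, ?_⟩
        simp only [mulVecLin_apply] at *
        rw [← Matrix.mulVec_mulVec, hw, ← hu, Matrix.mulVec_mulVec, h1, hu]
      · refine ⟨u, ?_⟩
        simp only [mulVecLin_apply] at *
        rw [← Matrix.mulVec_mulVec, hu, ← hw, Matrix.mulVec_mulVec, h2, hw]
  have e1 := Submodule.finrank_sup_add_finrank_inf_eq
    (LinearMap.range (A * Y).mulVecLin) (LinearMap.range (B * X).mulVecLin)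
  have e2 := Submodule.finrank_sup_add_finrank_inf_eq
    (LinearMap.range X.mulVecLin) (LinearMap.range Y.mulVecLin)
  rw [hinf] at e1
  have r1 : (Matrix.fromCols (A * Y) (B * X)).rank =
      Module.finrank ℂ ↥(LinearMap.range (A * Y).mulVecLin ⊔ LinearMap.range (B * X).mulVecLin) :=
    rank_fromColumns_aux _ _
  have r2 : (Matrix.fromCols X Y).rank =
      Module.finrank ℂ ↥(LinearMap.range X.mulVecLin ⊔ LinearMap.range Y.mulVecLin) :=
    rank_fromColumns_aux _ _
  have hAY : (A * Y).rank = Module.finrank ℂ ↥(LinearMap.range (A * Y).mulVecLin) := rfl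
  have hBX : (B * X).rank = Module.finrank ℂ ↥(LinearMap.range (B * X).mulVecLin) := rfl
  have hX : X.rank = Module.finrank ℂ ↥(LinearMap.range X.mulVecLin) := rfl
  have hY : Y.rank = Module.finrank ℂ ↥(LinearMap.range Y.mulVecLin) := rfl
  omega
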